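/- Let Z be a complex Banach space, q ≥ 1, τ > 0, c ∈ ℝ^q, γ ∈ ℂ^q and R₀,…,R_{q−1} ∈ ℂ such that Σ_{i=1}^q γ_i c_i^j = j! R_j for 0 ≤ j ≤ q−1. Then for every function h : ℝ → Z of class C^q whose q-th derivative is bounded, ‖ Σ_{i=1}^q γ_i h(τ c_i) − Σ_{j=0}^{q−1} R_j τ^j h^{(j)}(0) ‖ ≤ ( Σ_{i=1}^q |γ_i| |c_i|^q / q! ) · τ^q · sup_{s ∈ ℝ} ‖h^{(q)}(s)‖. -/

import Mathlib

open Finset in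
lemma taylor_aux {Z : Type*} [NormedAddCommGroup Z] [NormedSpace ℝ Z] :
    ∀ (q : ℕ) (h : ℝ → Z), ContDiff ℝ q h → ∀ (M : ℝ), (∀ s, ‖iteratedDeriv q h s‖ ≤ M) →
    ∀ x : ℝ, 0 ≤ x →
    ‖h x - ∑ j ∈ Finset.range q, ((j.factorial : ℝ)⁻¹ * x ^ j) • iteratedDeriv j h 0‖
      ≤ M * x ^ q / q.factorial := by
  intro q
  induction q with
  | zero => intro h hh M hM x hx; simpa using hM x
  | succ q IH =>
    intro h hh M hM x hx
    have hd : Differentiable ℝ h ∧ ContDiff ℝ q (deriv h) := by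
      have := contDiff_succ_iff_deriv.mp (show ContDiff ℝ ((q:ℕ∞) + 1) h by exact_mod_cast hh)
      exact ⟨this.1, this.2.2⟩
    set E : ℝ → Z := fun y => h y -
      ∑ j ∈ Finset.range (q+1), ((j.factorial : ℝ)⁻¹ * y ^ j) • iteratedDeriv j h 0 with hE
    set E' : ℝ → Z := fun y => deriv h y -
      ∑ j ∈ Finset.range q, ((j.factorial : ℝ)⁻¹ * y ^ j) • iteratedDeriv j (deriv h) 0 with hE'
    have hE0 : E 0 = 0 := by
      simp only [hE]
      rw [Finset.sum_eq_single 0]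
      · simp
      · intro b _ hb
        simp [zero_pow hb]
      · simp
    have hEderiv : ∀ y, HasDerivAt E (E' y) y := by
      intro y
      have h1 : HasDerivAt (fun y : ℝ =>
          ∑ j ∈ Finset.range (q+1), ((j.factorial : ℝ)⁻¹ * y ^ j) • iteratedDeriv j h 0)
          (∑ j ∈ Finset.range (q+1),
            ((j.factorial : ℝ)⁻¹ * (j * y ^ (j-1))) • iteratedDeriv j h 0) y := by
        apply HasDerivAt.fun_sum
        intro j _
        exact ((hasDerivAt_pow j y).const_mul _).smul_const _
      have h2 : (∑ j ∈ Finset.range (q+1),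
            ((j.factorial : ℝ)⁻¹ * (j * y ^ (j-1))) • iteratedDeriv j h 0)
          = ∑ j ∈ Finset.range q, ((j.factorial : ℝ)⁻¹ * y ^ j) • iteratedDeriv j (deriv h) 0 := by
        rw [Finset.sum_range_succ']
        simp only [Nat.cast_zero, zero_mul, mul_zero, zero_smul, add_zero]
        apply Finset.sum_congr rfl
        intro j _
        rw [← iteratedDeriv_succ']
        congr 1
        rw [Nat.factorial_succ, Nat.add_sub_cancel]
        push_cast
        have hj : ((j:ℝ)+1) ≠ 0 := by positivity
        field_simp
      rw [hE, hE']
      exact ((hd.1 y).hasDerivAt.sub (h2 ▸ h1))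
    have hEbound : ∀ y ∈ Set.Ico 0 x, ‖E' y‖ ≤ M * y ^ q / q.factorial := by
      intro y hy
      exact IH (deriv h) hd.2 M (fun s => by rw [← iteratedDeriv_succ']; exact hM s) y hy.1
    have := image_norm_le_of_norm_deriv_right_le_deriv_boundary
      (f := E) (f' := E') (a := 0) (b := x)
      (fun y _ => (hEderiv y).continuousAt.continuousWithinAt)
      (fun y _ => (hEderiv y).hasDerivWithinAt)
      (B := fun y => M * y ^ (q+1) / (q+1).factorial)
      (B' := fun y => M * y ^ q / q.factorial)
      (by simp [hE0])
      (fun y => by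
        have h3 := ((hasDerivAt_pow (q+1) y).const_mul M).div_const ((q+1).factorial : ℝ)
        refine h3.congr_deriv ?_
        rw [Nat.add_sub_cancel, Nat.factorial_succ]
        push_cast
        have hq1 : ((q:ℝ)+1) ≠ 0 := by positivity
        have hqf : ((q.factorial:ℝ)) ≠ 0 := by positivity
        field_simp)
      hEbound
    exact this (Set.mem_Icc.2 ⟨hx, le_refl x⟩)

open Finset in
lemma taylor_aux2 {Z : Type*} [NormedAddCommGroup Z] [NormedSpace ℝ Z]
    (q : ℕ) (h : ℝ → Z) (hh : ContDiff ℝ q h) (M : ℝ)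
    (hM : ∀ s, ‖iteratedDeriv q h s‖ ≤ M) (x : ℝ) :
    ‖h x - ∑ j ∈ Finset.range q, ((j.factorial : ℝ)⁻¹ * x ^ j) • iteratedDeriv j h 0‖
      ≤ M * |x| ^ q / q.factorial := by
  rcases le_or_gt 0 x with hx | hx
  · rw [abs_of_nonneg hx]; exact taylor_aux q h hh M hM x hx
  · set g : ℝ → Z := fun t => h (-t) with hg
    have hgc : ContDiff ℝ q g := hh.comp (contDiff_neg)
    have hgM : ∀ s, ‖iteratedDeriv q g s‖ ≤ M := by
      intro s
      rw [hg, iteratedDeriv_comp_neg, norm_smul]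
      simp only [norm_pow, norm_neg, norm_one, one_pow, one_mul]
      exact hM (-s)
    have key := taylor_aux q g hgc M hgM (-x) (by linarith)
    have e1 : g (-x) = h x := by simp [hg]
    have e2 : ∀ j, ((j.factorial : ℝ)⁻¹ * (-x) ^ j) • iteratedDeriv j g 0
        = ((j.factorial : ℝ)⁻¹ * x ^ j) • iteratedDeriv j h 0 := by
      intro j
      rw [hg, iteratedDeriv_comp_neg, neg_zero, smul_smul]
      congr 1
      rw [neg_pow x j]
      ring_nf
      rw [mul_comm j 2, pow_mul]
      norm_num
    rw [e1, Finset.sum_congr rfl (fun j _ => e2 j)] at key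
    rwa [abs_of_neg hx]


/-- Taylor quadrature estimate: if the weights `γ` reproduce the moments
`Σ_i γ_i c_i^j = j! R_j` for `0 ≤ j ≤ q−1`, then for every `C^q` function `h`
with bounded `q`-th derivative,
`‖Σ_i γ_i h(τc_i) − Σ_j R_j τ^j h^{(j)}(0)‖ ≤ (Σ_i |γ_i||c_i|^q/q!) τ^q sup ‖h^{(q)}‖`. -/
theorem stmt16
    {Z : Type*} [NormedAddCommGroup Z] [NormedSpace ℂ Z]
    (q : ℕ) (hq : 1 ≤ q) (τ : ℝ) (hτ : 0 < τ)
    (c : Fin q → ℝ) (γ : Fin q → ℂ) (R : Fin q → ℂ)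
    (hγ : ∀ j : Fin q, ∑ i, γ i * (c i : ℂ) ^ (j : ℕ)
      = ((j : ℕ).factorial : ℂ) * R j)
    (h : ℝ → Z) (hh : ContDiff ℝ q h)
    (hbd : ∃ C : ℝ, ∀ s : ℝ, ‖iteratedDeriv q h s‖ ≤ C) :
    ‖(∑ i, γ i • h (τ * c i))
        - ∑ j : Fin q, (R j * (τ : ℂ) ^ (j : ℕ)) • iteratedDeriv (j : ℕ) h 0‖
      ≤ (∑ i, ‖γ i‖ * |c i| ^ q / q.factorial) * τ ^ q
          * ⨆ s : ℝ, ‖iteratedDeriv q h s‖ := by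
  obtain ⟨C, hC⟩ := hbd
  set M : ℝ := ⨆ s : ℝ, ‖iteratedDeriv q h s‖ with hMdef
  have hM : ∀ s, ‖iteratedDeriv q h s‖ ≤ M := by
    intro s
    exact le_ciSup ⟨C, Set.forall_mem_range.2 hC⟩ s
  set E : Fin q → Z := fun i => h (τ * c i) -
    ∑ j : Fin q, (((j:ℕ).factorial : ℝ)⁻¹ * (τ * c i) ^ (j:ℕ)) • iteratedDeriv (j:ℕ) h 0
    with hEdef
  have hEbound : ∀ i, ‖E i‖ ≤ M * |τ * c i| ^ q / q.factorial := by
    intro i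
    have := taylor_aux2 q h hh M hM (τ * c i)
    rw [← Fin.sum_univ_eq_sum_range
      (fun j => ((j.factorial : ℝ)⁻¹ * (τ * c i) ^ j) • iteratedDeriv j h 0) q] at this
    exact this
  have hsplit : (∑ i, γ i • h (τ * c i))
      - ∑ j : Fin q, (R j * (τ : ℂ) ^ (j : ℕ)) • iteratedDeriv (j : ℕ) h 0
      = ∑ i, γ i • E i := by
    rw [hEdef]
    simp only [smul_sub, Finset.sum_sub_distrib]
    congr 1
    simp only [Finset.smul_sum]
    rw [Finset.sum_comm]
    apply Finset.sum_congr rfl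
    intro j _
    symm
    have : ∀ i : Fin q, γ i • ((((j:ℕ).factorial : ℝ)⁻¹ * (τ * c i) ^ (j:ℕ)) •
        iteratedDeriv (j:ℕ) h 0)
        = (γ i * ((((j:ℕ).factorial : ℂ)⁻¹ * ((τ:ℂ) * (c i:ℂ)) ^ (j:ℕ)))) •
          iteratedDeriv (j:ℕ) h 0 := by
      intro i
      rw [← algebraMap_smul ℂ ((((j:ℕ).factorial : ℝ)⁻¹ * (τ * c i) ^ (j:ℕ))), smul_smul]
      congr 1
      rw [Complex.coe_algebraMap]
      push_cast
      ring
    rw [Finset.sum_congr rfl (fun i _ => this i), ← Finset.sum_smul]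
    congr 1
    have hfac : (((j:ℕ).factorial : ℂ)) ≠ 0 := by
      exact_mod_cast Nat.cast_ne_zero.2 (Nat.factorial_ne_zero _)
    calc ∑ i, γ i * (((j:ℕ).factorial : ℂ)⁻¹ * ((τ:ℂ) * (c i:ℂ)) ^ (j:ℕ))
        = ((j:ℕ).factorial : ℂ)⁻¹ * (τ:ℂ) ^ (j:ℕ) * ∑ i, γ i * (c i : ℂ) ^ (j:ℕ) := by
          rw [Finset.mul_sum]
          apply Finset.sum_congr rfl
          intro i _
          rw [mul_pow]
          ring_nf
      _ = R j * (τ:ℂ) ^ (j:ℕ) := by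
          rw [hγ j]
          field_simp
  rw [hsplit]
  calc ‖∑ i, γ i • E i‖ ≤ ∑ i, ‖γ i • E i‖ := norm_sum_le _ _
    _ ≤ ∑ i, ‖γ i‖ * (M * |τ * c i| ^ q / q.factorial) := by
        apply Finset.sum_le_sum
        intro i _
        rw [norm_smul]
        exact mul_le_mul_of_nonneg_left (hEbound i) (norm_nonneg _)
    _ = (∑ i, ‖γ i‖ * |c i| ^ q / q.factorial) * τ ^ q * M := by
        rw [Finset.sum_mul, Finset.sum_mul]
        apply Finset.sum_congr rfl
        intro i _
        rw [abs_mul, abs_of_pos hτ, mul_pow]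
        ring
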